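/- A t-ary tree with ℓ ≥ 1 leaves that has minimal path length among all t-ary trees with ℓ leaves has exactly ℓ + ⌈(ℓ−1)/(t−1)⌉ nodes. -/

import Mathlib

/-- A `t`-ary tree: either empty, or a root node with `t` ordered subtrees. -/
inductive TAry (t : ℕ) : Type where
  | nil : TAry t
  | node : (Fin t → TAry t) → TAry t

namespace TAry

variable {t : ℕ}

/-- Number of nodes of a `t`-ary tree. -/
def size : TAry t → ℕ
  | nil => 0
  | node c => 1 + ∑ i, (c i).size

/-- Sum over nodes of `d +` (depth of the node). -/
def plFrom : TAry t → ℕ → ℕ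
  | nil, _ => 0
  | node c, d => d + ∑ i, (c i).plFrom (d + 1)

/-- Path length: the sum of the depths of all nodes. -/
def pathLength (T : TAry t) : ℕ := T.plFrom 0

/-- Number of nodes at depth `j` (the profile `D_j`). -/
def depthCount : ℕ → TAry t → ℕ
  | _, nil => 0
  | 0, node _ => 1
  | j + 1, node c => ∑ i, depthCount j (c i)

/-- Number of leaves (nodes all of whose subtrees are empty). -/
def leaves : TAry t → ℕ
  | nil => 0
  | node c => max 1 (∑ i, (c i).leaves)

end TAry

namespace TAry
variable {t : ℕ}

/-- Every internal (non-leaf) node has exactly one child. -/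
def chain : TAry t → Prop
  | nil => True
  | node c => (∀ i, c i = nil) ∨ ∃ i, c i ≠ nil ∧ chain (c i) ∧ ∀ j, j ≠ i → c j = nil

/-- Number of leaves at depth `j`. -/
def leavesAt : ℕ → TAry t → ℕ
  | _, nil => 0
  | 0, node c => if (∑ i, (c i).size) = 0 then 1 else 0
  | j + 1, node c => ∑ i, leavesAt j (c i)

/-- The subtree of `T` at position `pos` (empty tree if the position is invalid). -/
def getAt : TAry t → List (Fin t) → TAry t
  | T, [] => T
  | nil, _ :: _ => nil
  | node c, i :: rest => getAt (c i) rest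

/-- Replace the subtree of `T` at position `pos` by `τ`. -/
def replaceAt : TAry t → List (Fin t) → TAry t → TAry t
  | _, [], τ => τ
  | nil, _ :: _, _ => nil
  | node c, i :: rest, τ => node (fun j => if j = i then replaceAt (c i) rest τ else c j)

/-- Attach the trees `τs i` at the positions `pos i`, for `i = 0, …, ℓ-1`. -/
def attachAll {ℓ : ℕ} (T : TAry t) (pos : Fin ℓ → List (Fin t)) (τs : Fin ℓ → TAry t) :
    TAry t :=
  (List.finRange ℓ).foldl (fun A i => replaceAt A (pos i) (τs i)) T

end TAry

/-- The binary entropy function (natural logarithm). -/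
noncomputable def binEnt (x : ℝ) : ℝ := -x * Real.log x - (1 - x) * Real.log (1 - x)

/-- Number of `t`-ary trees with exactly `n` nodes. -/
noncomputable def Ct (t n : ℕ) : ℕ := Nat.card {T : TAry t // T.size = n}

/-- Number of `t`-ary trees with path length exactly `p`. -/
noncomputable def Tt (t p : ℕ) : ℕ := Nat.card {T : TAry t // T.pathLength = p}

namespace TAry
variable {t : ℕ}

instance decEqNil : ∀ (X : TAry t), Decidable (X = nil)
  | nil => .isTrue rfl
  | node _ => .isFalse (fun h => by cases h)

@[simp] lemma getAt_nil_pos (T : TAry t) : getAt T [] = T := by cases T <;> rfl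

@[simp] lemma replaceAt_nil_pos (T τ : TAry t) : replaceAt T [] τ = τ := by cases T <;> rfl

lemma node_ne_nil (c : Fin t → TAry t) : node c ≠ nil := fun h => by cases h

lemma getAt_nil (p : List (Fin t)) : getAt (nil : TAry t) p = nil := by
  cases p <;> rfl

lemma ne_nil_of_getAt {T : TAry t} {p : List (Fin t)} (h : getAt T p ≠ nil) : T ≠ nil := by
  rintro rfl; exact h (getAt_nil p)

lemma replaceAt_ne_nil {T : TAry t} {p : List (Fin t)} {τ : TAry t}
    (h : getAt T p ≠ nil) (hτ : τ ≠ nil) : replaceAt T p τ ≠ nil := by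
  cases p with
  | nil => simpa using hτ
  | cons i rest =>
    cases T with
    | nil => exact absurd rfl (ne_nil_of_getAt h)
    | node c => exact node_ne_nil _

lemma getAt_append (T : TAry t) (p q : List (Fin t)) :
    getAt T (p ++ q) = getAt (getAt T p) q := by
  induction p generalizing T with
  | nil => simp
  | cons i rest ih =>
    cases T with
    | nil => simp [getAt_nil]
    | node c => simpa [getAt] using ih (c i)

lemma plFrom_eq (T : TAry t) (d : ℕ) : plFrom T d = plFrom T 0 + d * size T := by
  induction T generalizing d with
  | nil => show (0:ℕ) = 0 + d * size nil; simp [size]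
  | node c ih =>
    show d + ∑ i, (c i).plFrom (d+1) = (0 + ∑ i, (c i).plFrom 1) + d * (1 + ∑ i, (c i).size)
    have h1 : ∀ i, (c i).plFrom (d+1) = (c i).plFrom 0 + (d+1) * (c i).size := fun i => ih i _
    have h2 : ∀ i, (c i).plFrom 1 = (c i).plFrom 0 + 1 * (c i).size := fun i => ih i _
    simp only [h1, h2, Finset.sum_add_distrib, ← Finset.mul_sum]
    ring

end TAry

namespace TAry
variable {t : ℕ}

/-- Replacing along a branch diverging from `q` does not change `getAt` at `q`. -/
lemma getAt_replaceAt_diverge (s : List (Fin t)) {i j : Fin t} (hij : i ≠ j)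
    (r' q' : List (Fin t)) (T τ : TAry t) :
    getAt (replaceAt T (s ++ i :: r') τ) (s ++ j :: q') = getAt T (s ++ j :: q') := by
  induction s generalizing T with
  | nil =>
    cases T with
    | nil => simp [replaceAt, getAt_nil]
    | node c => simp [replaceAt, getAt, if_neg hij.symm]
  | cons a s ih =>
    cases T with
    | nil => simp [replaceAt, getAt_nil]
    | node c =>
      simpa only [List.cons_append, replaceAt, getAt, if_pos] using ih (c a)

/-- `getAt` after replacing deeper below `p`. -/
lemma getAt_replaceAt_prefix (p s : List (Fin t)) (T τ : TAry t) (h : getAt T p ≠ nil) :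
    getAt (replaceAt T (p ++ s) τ) p = replaceAt (getAt T p) s τ := by
  induction p generalizing T with
  | nil =>
    show getAt (replaceAt T s τ) [] = replaceAt (getAt T []) s τ
    rw [getAt_nil_pos, getAt_nil_pos]
  | cons i rest ih =>
    cases T with
    | nil => exact absurd rfl (ne_nil_of_getAt h)
    | node c =>
      simp only [List.cons_append, replaceAt, getAt, if_pos rfl]
      exact ih (c i) h

/-- Two distinct lists of the same length diverge. -/
lemma exists_diverge_of_ne {α : Type*} :
    ∀ (p q : List α), p.length = q.length → p ≠ q →
    ∃ s i j p' q', i ≠ j ∧ p = s ++ i :: p' ∧ q = s ++ j :: q'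
  | [], [], _, hne => absurd rfl hne
  | [], b :: q, hl, _ => by simp at hl
  | a :: p, [], hl, _ => by simp at hl
  | a :: p, b :: q, hl, hne => by
    by_cases hab : a = b
    · subst hab
      have hpq : p ≠ q := fun h => hne (by rw [h])
      obtain ⟨s, i, j, p', q', hij, hp, hq⟩ :=
        exists_diverge_of_ne p q (by simpa using hl) hpq
      exact ⟨a :: s, i, j, p', q', hij, by simp [hp], by simp [hq]⟩
    · exact ⟨[], a, b, p, q, hab, rfl, rfl⟩

/-- A shorter list is a prefix of a longer one, or they diverge. -/
lemma prefix_or_diverge {α : Type*} :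
    ∀ (p q : List α), p.length ≤ q.length →
    (∃ s, q = p ++ s) ∨ ∃ s i j p' q', i ≠ j ∧ p = s ++ i :: p' ∧ q = s ++ j :: q'
  | [], q, _ => .inl ⟨q, rfl⟩
  | a :: p, [], hl => by simp at hl
  | a :: p, b :: q, hl => by
    by_cases hab : a = b
    · subst hab
      rcases prefix_or_diverge p q (by simpa using hl) with ⟨s, rfl⟩ | ⟨s, i, j, p', q', h1, h2, h3⟩
      · exact .inl ⟨s, rfl⟩
      · exact .inr ⟨a :: s, i, j, p', q', h1, by simp [h2], by simp [h3]⟩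
    · exact .inr ⟨[], a, b, p, q, hab, rfl, rfl⟩

end TAry

namespace TAry
variable {t : ℕ}

lemma child_ne_nil_of_getAt {c : Fin t → TAry t} {i : Fin t} {rest : List (Fin t)}
    (h : getAt (node c) (i :: rest) ≠ nil) : c i ≠ nil := by
  intro hnil
  apply h
  show getAt (c i) rest = nil
  rw [hnil, getAt_nil]

/-- Sum over children splits off index `i`. -/
lemma sum_children (F : TAry t → ℕ) (c : Fin t → TAry t) (i : Fin t) (X : TAry t) :
    ∑ j, F (if j = i then X else c j) = F X + ∑ j ∈ {i}ᶜ, F (c j) := by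
  rw [Fintype.sum_eq_add_sum_compl i]
  simp only [if_pos rfl]
  congr 1
  apply Finset.sum_congr rfl
  intro j hj
  rw [if_neg (by simpa using hj)]

lemma sum_split (F : TAry t → ℕ) (c : Fin t → TAry t) (i : Fin t) :
    ∑ j, F (c j) = F (c i) + ∑ j ∈ {i}ᶜ, F (c j) :=
  Fintype.sum_eq_add_sum_compl i _

def loc (φ : (Fin t → TAry t) → ℕ) : TAry t → ℕ
  | nil => 0
  | node c => φ c + ∑ i, loc φ (c i)

lemma loc_node (φ : (Fin t → TAry t) → ℕ) (c : Fin t → TAry t) :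
    loc φ (node c) = φ c + ∑ i, loc φ (c i) := rfl

/-- Generic replacement lemma for local counters, for non-nil → non-nil replacement. -/
lemma loc_replace (φ : (Fin t → TAry t) → ℕ)
    (Hφ : ∀ c c' : Fin t → TAry t, (∀ i, c i = nil ↔ c' i = nil) → φ c = φ c')
    (p : List (Fin t)) (T τ : TAry t) (h : getAt T p ≠ nil) (hτ : τ ≠ nil) :
    loc φ (replaceAt T p τ) + loc φ (getAt T p) = loc φ T + loc φ τ := by
  induction p generalizing T with
  | nil => simp [Nat.add_comm]
  | cons i rest ih =>
    cases T with
    | nil => exact absurd rfl (ne_nil_of_getAt h)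
    | node c =>
      have hci : c i ≠ nil := child_ne_nil_of_getAt h
      have hval : getAt (c i) rest ≠ nil := h
      have hR : replaceAt (c i) rest τ ≠ nil := replaceAt_ne_nil hval hτ
      show loc φ (node fun j => if j = i then replaceAt (c i) rest τ else c j)
          + loc φ (getAt (c i) rest) = loc φ (node c) + loc φ τ
      rw [loc_node, loc_node, sum_children (loc φ) c i]
      have hφ : φ (fun j => if j = i then replaceAt (c i) rest τ else c j) = φ c := by
        apply Hφ
        intro j
        by_cases hj : j = i
        · subst hj; simp only [if_pos rfl]
          constructor
          · intro hh; exact absurd hh hR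
          · intro hh; exact absurd hh hci
        · simp [if_neg hj]
      rw [hφ]
      have := ih (c i) hval
      have hsplit : ∑ j, loc φ (c j) = loc φ (c i) + ∑ j ∈ {i}ᶜ, loc φ (c j) := by
        exact sum_split (loc φ) c i
      omega

/-- Replacement lemma for path length. -/
lemma plFrom_replace (p : List (Fin t)) (T τ : TAry t) (h : getAt T p ≠ nil) (d : ℕ) :
    plFrom (replaceAt T p τ) d + plFrom (getAt T p) (d + p.length)
      = plFrom T d + plFrom τ (d + p.length) := by
  induction p generalizing T d with
  | nil => simp [Nat.add_comm]
  | cons i rest ih =>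
    cases T with
    | nil => exact absurd rfl (ne_nil_of_getAt h)
    | node c =>
      have hval : getAt (c i) rest ≠ nil := h
      show plFrom (node fun j => if j = i then replaceAt (c i) rest τ else c j) d
          + plFrom (getAt (c i) rest) (d + (rest.length + 1))
          = plFrom (node c) d + plFrom τ (d + (rest.length + 1))
      show (d + ∑ j, plFrom (if j = i then replaceAt (c i) rest τ else c j) (d+1))
          + plFrom (getAt (c i) rest) (d + (rest.length + 1))
          = (d + ∑ j, plFrom (c j) (d+1)) + plFrom τ (d + (rest.length + 1))
      rw [sum_children (fun X => plFrom X (d+1)) c i]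
      have := ih (c i) hval (d+1)
      have hsplit : ∑ j, plFrom (c j) (d+1)
          = plFrom (c i) (d+1) + ∑ j ∈ {i}ᶜ, plFrom (c j) (d+1) := by
        exact sum_split (fun X => plFrom X (d+1)) c i
      have harith : d + 1 + rest.length = d + (rest.length + 1) := by omega
      rw [harith] at this
      omega

end TAry

namespace TAry
variable {t : ℕ}

def cnt (c : Fin t → TAry t) : ℕ := (Finset.univ.filter fun i => ¬ c i = nil).card

def phiLeaf (c : Fin t → TAry t) : ℕ := if cnt c = 0 then 1 else 0
def phiInt (c : Fin t → TAry t) : ℕ := if cnt c = 0 then 0 else 1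
def phiSlack {t : ℕ} (c : Fin t → TAry t) : ℕ := if cnt c = 0 then 0 else t - cnt c
def phiSlot {t : ℕ} (c : Fin t → TAry t) : ℕ := if 1 ≤ cnt c ∧ cnt c ≤ t - 1 then 1 else 0
def phiC1 (c : Fin t → TAry t) : ℕ := if cnt c = 1 then 1 else 0
def phiExc (c : Fin t → TAry t) : ℕ := cnt c - 1

lemma cnt_congr {c c' : Fin t → TAry t} (h : ∀ i, c i = nil ↔ c' i = nil) :
    cnt c = cnt c' := by
  unfold cnt
  congr 1
  apply Finset.filter_congr
  intro i _
  simp [h i]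

lemma cnt_le (c : Fin t → TAry t) : cnt c ≤ t := by
  have := Finset.card_filter_le Finset.univ (fun i => ¬ c i = nil)
  simpa [cnt] using this

lemma cnt_eq_zero_iff {c : Fin t → TAry t} : cnt c = 0 ↔ ∀ i, c i = nil := by
  unfold cnt
  rw [Finset.card_eq_zero, Finset.filter_eq_empty_iff]
  simp

lemma cnt_pos_of_ne {c : Fin t → TAry t} {i : Fin t} (h : c i ≠ nil) : 1 ≤ cnt c := by
  have hm : i ∈ Finset.univ.filter fun j => ¬ c j = nil := by simp [h]
  exact Finset.card_pos.mpr ⟨i, hm⟩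

lemma sum_eq_sum_nonnil (F : TAry t → ℕ) (hF : F nil = 0) (c : Fin t → TAry t) :
    ∑ i, F (c i) = ∑ i ∈ Finset.univ.filter (fun i => ¬ c i = nil), F (c i) := by
  symm
  apply Finset.sum_subset (Finset.filter_subset _ _)
  intro i _ hi
  simp only [Finset.mem_filter, Finset.mem_univ, true_and, not_not] at hi
  rw [hi, hF]

lemma loc_add_of {φ ψ χ : (Fin t → TAry t) → ℕ} (h : ∀ c, φ c + ψ c = χ c) (T : TAry t) :
    loc φ T + loc ψ T = loc χ T := by
  induction T with
  | nil => rfl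
  | node c ih =>
    rw [loc_node, loc_node, loc_node]
    have hs : ∑ i, loc φ (c i) + ∑ i, loc ψ (c i) = ∑ i, loc χ (c i) := by
      rw [← Finset.sum_add_distrib]
      exact Finset.sum_congr rfl fun i _ => ih i
    have := h c
    omega

lemma loc_le_of {φ ψ : (Fin t → TAry t) → ℕ} {k : ℕ} (h : ∀ c, φ c ≤ k * ψ c) (T : TAry t) :
    loc φ T ≤ k * loc ψ T := by
  induction T with
  | nil => simp [loc]
  | node c ih =>
    rw [loc_node, loc_node, Nat.mul_add, Finset.mul_sum]
    exact Nat.add_le_add (h c) (Finset.sum_le_sum fun i _ => ih i)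

lemma one_le_leaves {T : TAry t} (h : T ≠ nil) : 1 ≤ leaves T := by
  cases T with
  | nil => exact absurd rfl h
  | node c => exact le_max_left _ _

lemma leaves_eq_loc (T : TAry t) : leaves T = loc phiLeaf T := by
  induction T with
  | nil => rfl
  | node c ih =>
    show max 1 (∑ i, leaves (c i)) = phiLeaf c + ∑ i, loc phiLeaf (c i)
    rw [Finset.sum_congr rfl (fun i _ => ih i)]
    by_cases h0 : cnt c = 0
    · have hall := cnt_eq_zero_iff.mp h0
      have : ∀ i, loc phiLeaf (c i) = 0 := fun i => by rw [hall i]; rfl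
      simp [phiLeaf, h0, Finset.sum_congr rfl (fun i _ => this i)]
    · obtain ⟨i, hi⟩ : ∃ i, c i ≠ nil := by
        by_contra hc
        push_neg at hc
        exact h0 (cnt_eq_zero_iff.mpr hc)
      have h1 : 1 ≤ loc phiLeaf (c i) := by rw [← ih i]; exact one_le_leaves hi
      have hsum : 1 ≤ ∑ j, loc phiLeaf (c j) :=
        le_trans h1 (Finset.single_le_sum (f := fun j => loc phiLeaf (c j))
          (fun j _ => Nat.zero_le _) (Finset.mem_univ i))
      simp [phiLeaf, h0, Nat.max_eq_right hsum]

lemma size_eq_loc (T : TAry t) : size T = loc (fun _ => 1) T := by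
  induction T with
  | nil => rfl
  | node c ih =>
    show 1 + ∑ i, size (c i) = 1 + ∑ i, loc (fun _ => 1) (c i)
    rw [Finset.sum_congr rfl fun i _ => ih i]

lemma leaves_eq_one_add_exc {T : TAry t} (h : T ≠ nil) :
    loc phiLeaf T = 1 + loc phiExc T := by
  induction T with
  | nil => exact absurd rfl h
  | node c ih =>
    rw [loc_node, loc_node]
    by_cases h0 : cnt c = 0
    · have hall := cnt_eq_zero_iff.mp h0
      have hz : ∀ φ : (Fin t → TAry t) → ℕ, ∀ i, loc φ (c i) = 0 := fun φ i => by
        rw [hall i]; rfl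
      simp [phiLeaf, phiExc, h0, Finset.sum_congr rfl (fun i _ => hz phiLeaf i),
        Finset.sum_congr rfl (fun i _ => hz phiExc i)]
    · have hL : ∑ i, loc phiLeaf (c i)
          = ∑ i ∈ Finset.univ.filter (fun i => ¬ c i = nil), loc phiLeaf (c i) :=
        sum_eq_sum_nonnil _ rfl c
      have hE : ∑ i, loc phiExc (c i)
          = ∑ i ∈ Finset.univ.filter (fun i => ¬ c i = nil), loc phiExc (c i) :=
        sum_eq_sum_nonnil _ rfl c
      have hstep : ∀ i ∈ Finset.univ.filter (fun i => ¬ c i = nil),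
          loc phiLeaf (c i) = 1 + loc phiExc (c i) := by
        intro i hi
        simp only [Finset.mem_filter, Finset.mem_univ, true_and] at hi
        exact ih i hi
      rw [hL, Finset.sum_congr rfl hstep, Finset.sum_add_distrib]
      simp only [Finset.sum_const, smul_eq_mul, mul_one]
      have hcnt : 1 ≤ cnt c := Nat.pos_of_ne_zero h0
      have hcard : (Finset.univ.filter fun i => ¬ c i = nil).card = cnt c := rfl
      have h1 : phiLeaf c = 0 := by simp [phiLeaf, h0]
      have h2 : phiExc c = cnt c - 1 := rfl
      rw [hE, hcard, h1, h2]
      omega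

end TAry

namespace TAry
variable {t : ℕ}

lemma loc_smul (k : ℕ) (φ : (Fin t → TAry t) → ℕ) (T : TAry t) :
    loc (fun c => k * φ c) T = k * loc φ T := by
  induction T with
  | nil => simp [loc]
  | node c ih =>
    rw [loc_node, loc_node, Nat.mul_add, Finset.mul_sum]
    rw [Finset.sum_congr rfl fun i _ => ih i]

lemma slack_add_exc (T : TAry t) :
    loc phiSlack T + loc phiExc T = (t - 1) * loc phiInt T := by
  rw [← loc_smul (t-1) phiInt T]
  apply loc_add_of
  intro c
  have := cnt_le c
  unfold phiSlack phiExc phiInt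
  by_cases h0 : cnt c = 0 <;> simp [h0] <;> omega

lemma size_eq_leaves_add_int (T : TAry t) :
    size T = loc phiLeaf T + loc phiInt T := by
  rw [size_eq_loc]
  symm
  apply loc_add_of
  intro c
  unfold phiLeaf phiInt
  by_cases h0 : cnt c = 0 <;> simp [h0]

lemma slack_le_slot (T : TAry t) : loc phiSlack T ≤ (t - 1) * loc phiSlot T := by
  apply loc_le_of
  intro c
  have := cnt_le c
  unfold phiSlack phiSlot
  by_cases h0 : cnt c = 0
  · simp [h0]
  · by_cases h1 : 1 ≤ cnt c ∧ cnt c ≤ t - 1 <;> simp [h0, h1] <;> omega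

lemma slack_le_slot_of_c1_free {T : TAry t} (h : loc phiC1 T = 0) :
    loc phiSlack T ≤ (t - 2) * loc phiSlot T := by
  induction T with
  | nil => simp [loc]
  | node c ih =>
    rw [loc_node, loc_node]
    rw [loc_node] at h
    have hroot : phiC1 c = 0 := by omega
    have hch : ∀ i, loc phiC1 (c i) = 0 := by
      intro i
      have : ∑ i, loc phiC1 (c i) = 0 := by omega
      exact Finset.sum_eq_zero_iff.mp this i (Finset.mem_univ i)
    have hs : ∑ i, loc phiSlack (c i) ≤ ∑ i, (t-2) * loc phiSlot (c i) :=
      Finset.sum_le_sum fun i _ => ih i (hch i)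
    rw [← Finset.mul_sum] at hs
    have hc1 : cnt c ≠ 1 := by
      intro h1; unfold phiC1 at hroot; rw [if_pos h1] at hroot; omega
    have hct := cnt_le c
    have hpt : phiSlack c ≤ (t-2) * phiSlot c := by
      unfold phiSlack phiSlot
      by_cases h0 : cnt c = 0
      · simp [h0]
      · by_cases h1 : 1 ≤ cnt c ∧ cnt c ≤ t - 1 <;> simp [h0, h1] <;> omega
    calc phiSlack c + ∑ i, loc phiSlack (c i)
        ≤ (t-2) * phiSlot c + (t-2) * ∑ i, loc phiSlot (c i) := Nat.add_le_add hpt hs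
      _ = (t-2) * (phiSlot c + ∑ i, loc phiSlot (c i)) := by ring

lemma loc_pos_of_witness {φ : (Fin t → TAry t) → ℕ} :
    ∀ (p : List (Fin t)) (T : TAry t) (c : Fin t → TAry t),
      getAt T p = node c → 1 ≤ φ c → 1 ≤ loc φ T
  | [], T, c, hg, hφ => by
    rw [getAt_nil_pos] at hg
    subst hg
    rw [loc_node]
    omega
  | i :: rest, T, c, hg, hφ => by
    cases T with
    | nil => rw [getAt_nil] at hg; exact absurd hg.symm (node_ne_nil c)
    | node c0 =>
      have : 1 ≤ loc φ (c0 i) := loc_pos_of_witness rest (c0 i) c hg hφ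
      rw [loc_node]
      have hle : loc φ (c0 i) ≤ ∑ j, loc φ (c0 j) :=
        Finset.single_le_sum (f := fun j => loc φ (c0 j))
          (fun j _ => Nat.zero_le _) (Finset.mem_univ i)
      omega

lemma exists_witness {φ : (Fin t → TAry t) → ℕ} :
    ∀ (T : TAry t), 1 ≤ loc φ T → ∃ p c, getAt T p = node c ∧ 1 ≤ φ c := by
  intro T
  induction T with
  | nil => intro h; simp [loc] at h
  | node c ih =>
    intro h
    rw [loc_node] at h
    by_cases hr : 1 ≤ φ c
    · exact ⟨[], c, getAt_nil_pos _, hr⟩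
    · have hs : 1 ≤ ∑ i, loc φ (c i) := by omega
      obtain ⟨i, hi⟩ : ∃ i, 1 ≤ loc φ (c i) := by
        by_contra hc
        push_neg at hc
        have : ∑ i, loc φ (c i) = 0 :=
          Finset.sum_eq_zero fun i _ => by have := hc i; omega
        omega
      obtain ⟨p, c', hg, hφ⟩ := ih i hi
      exact ⟨i :: p, c', hg, hφ⟩

lemma two_sum_split (f : Fin t → ℕ) (h : 2 ≤ ∑ i, f i) :
    (∃ i, 2 ≤ f i) ∨ (∃ i j, i ≠ j ∧ 1 ≤ f i ∧ 1 ≤ f j) := by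
  classical
  set s := Finset.univ.filter (fun i => 1 ≤ f i) with hs
  have hsum : ∑ i, f i = ∑ i ∈ s, f i := by
    symm
    apply Finset.sum_subset (Finset.filter_subset _ _)
    intro i _ hi
    simp [hs] at hi
    omega
  by_cases hcard : 2 ≤ s.card
  · obtain ⟨a, ha, b, hb, hab⟩ := Finset.one_lt_card.mp hcard
    simp [hs] at ha hb
    exact .inr ⟨a, b, hab, ha, hb⟩
  · interval_cases h' : s.card
    · rw [Finset.card_eq_zero] at h'
      rw [hsum, h'] at h
      simp at h
    · rw [Finset.card_eq_one] at h'
      obtain ⟨a, ha⟩ := h'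
      rw [hsum, ha, Finset.sum_singleton] at h
      exact .inl ⟨a, h⟩

lemma exists_two_witnesses {φ : (Fin t → TAry t) → ℕ} (hφ1 : ∀ c, φ c ≤ 1) :
    ∀ (T : TAry t), 2 ≤ loc φ T →
      ∃ p q cp cq, p ≠ q ∧ getAt T p = node cp ∧ 1 ≤ φ cp ∧
        getAt T q = node cq ∧ 1 ≤ φ cq := by
  intro T
  induction T with
  | nil => intro h; simp [loc] at h
  | node c ih =>
    intro h
    rw [loc_node] at h
    by_cases hr : 1 ≤ φ c
    · have hs : 1 ≤ ∑ i, loc φ (c i) := by have := hφ1 c; omega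
      obtain ⟨i, hi⟩ : ∃ i, 1 ≤ loc φ (c i) := by
        by_contra hc
        push_neg at hc
        have : ∑ i, loc φ (c i) = 0 :=
          Finset.sum_eq_zero fun i _ => by have := hc i; omega
        omega
      obtain ⟨p, c', hg, hφ'⟩ := exists_witness (c i) hi
      exact ⟨[], i :: p, c, c', by simp, getAt_nil_pos _, hr, hg, hφ'⟩
    · have hs : 2 ≤ ∑ i, loc φ (c i) := by omega
      rcases two_sum_split _ hs with ⟨i, hi⟩ | ⟨i, j, hij, hi, hj⟩
      · obtain ⟨p, q, cp, cq, hpq, h1, h2, h3, h4⟩ := ih i hi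
        exact ⟨i :: p, i :: q, cp, cq, by simpa using hpq, h1, h2, h3, h4⟩
      · obtain ⟨p, cp, h1, h2⟩ := exists_witness (c i) hi
        obtain ⟨q, cq, h3, h4⟩ := exists_witness (c j) hj
        exact ⟨i :: p, j :: q, cp, cq, by simp [hij], h1, h2, h3, h4⟩

end TAry

namespace TAry
variable {t : ℕ}

lemma one_le_size {X : TAry t} (h : X ≠ nil) : 1 ≤ size X := by
  cases X with
  | nil => exact absurd rfl h
  | node c => show 1 ≤ 1 + _ ; omega

lemma phiLeaf_congr : ∀ c c' : Fin t → TAry t, (∀ i, c i = nil ↔ c' i = nil) →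
    phiLeaf c = phiLeaf c' := fun c c' hp => by unfold phiLeaf; rw [cnt_congr hp]

lemma phiSlack_congr : ∀ c c' : Fin t → TAry t, (∀ i, c i = nil ↔ c' i = nil) →
    phiSlack c = phiSlack c' := fun c c' hp => by unfold phiSlack; rw [cnt_congr hp]

lemma phiSlot_congr : ∀ c c' : Fin t → TAry t, (∀ i, c i = nil ↔ c' i = nil) →
    phiSlot c = phiSlot c' := fun c c' hp => by unfold phiSlot; rw [cnt_congr hp]

lemma cnt_eq_one_elim {cv : Fin t → TAry t} (h : cnt cv = 1) :
    ∃ i₀, cv i₀ ≠ nil ∧ ∀ k, k ≠ i₀ → cv k = nil := by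
  obtain ⟨a, ha⟩ := Finset.card_eq_one.mp h
  refine ⟨a, ?_, ?_⟩
  · have : a ∈ Finset.univ.filter fun i => ¬ cv i = nil := ha ▸ Finset.mem_singleton_self a
    simpa using this
  · intro k hk
    by_contra hkn
    have : k ∈ Finset.univ.filter fun i => ¬ cv i = nil := by simp [hkn]
    rw [ha, Finset.mem_singleton] at this
    exact hk this

/-- Contraction surgery: a node with exactly one child can be contracted,
strictly decreasing path length and preserving leaves. -/
lemma contract_surgery {T : TAry t} {q : List (Fin t)} {cv : Fin t → TAry t}
    (hg : getAt T q = node cv) (h1 : cnt cv = 1) :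
    ∃ T' : TAry t, leaves T' = leaves T ∧ plFrom T' 0 < plFrom T 0 := by
  obtain ⟨i₀, hi₀, hrest⟩ := cnt_eq_one_elim h1
  set w := cv i₀ with hw
  have hval : getAt T q ≠ nil := by rw [hg]; exact node_ne_nil cv
  refine ⟨replaceAt T q w, ?_, ?_⟩
  · have hrep := loc_replace phiLeaf phiLeaf_congr q T w hval hi₀
    rw [hg] at hrep
    have hnode : loc phiLeaf (node cv) = loc phiLeaf w := by
      rw [loc_node]
      have hsum : ∑ k, loc phiLeaf (cv k) = loc phiLeaf w := by
        apply Finset.sum_eq_single i₀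
        · intro k _ hk; rw [hrest k hk]; rfl
        · intro h; exact absurd (Finset.mem_univ i₀) h
      have hphi : phiLeaf cv = 0 := by unfold phiLeaf; rw [h1]; simp
      rw [hsum, hphi, Nat.zero_add]
    rw [leaves_eq_loc, leaves_eq_loc]
    omega
  · have hrep := plFrom_replace q T w hval 0
    rw [hg] at hrep
    have hnode : plFrom (node cv) (0 + q.length)
        = (0 + q.length) + (plFrom w (0 + q.length) + size w) := by
      show (0 + q.length) + ∑ k, plFrom (cv k) ((0 + q.length) + 1) = _
      have hsum : ∑ k, plFrom (cv k) ((0 + q.length) + 1)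
          = plFrom w ((0 + q.length) + 1) := by
        apply Finset.sum_eq_single i₀
        · intro k _ hk; rw [hrest k hk]; rfl
        · intro h; exact absurd (Finset.mem_univ i₀) h
      rw [hsum, plFrom_eq w ((0 + q.length) + 1), plFrom_eq w (0 + q.length)]
      ring
    have hsz : 1 ≤ size w := one_le_size hi₀
    omega

end TAry

namespace TAry
variable {t : ℕ}

lemma cnt_eq_sum (c : Fin t → TAry t) : cnt c = ∑ i, (if c i = nil then 0 else 1) := by
  unfold cnt
  rw [Finset.card_filter]
  apply Finset.sum_congr rfl
  intro i _
  by_cases h : c i = nil <;> simp [h]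

section moves

variable (cu cv : Fin t → TAry t) (A' B' : Finset (Fin t))

/-- The children of the receiving node after the move. -/
def zc (e : {x // x ∈ B'} ≃ {x // x ∈ A'}) : Fin t → TAry t :=
  fun j => if h : j ∈ B' then cv (e ⟨j, h⟩).1 else cu j

/-- The children of the donating node after the move. -/
def vc : Fin t → TAry t := fun k => if k ∈ A' then nil else cv k

variable (e : {x // x ∈ B'} ≃ {x // x ∈ A'})

lemma sum_zc (hBnil : ∀ j ∈ B', cu j = nil) (F : TAry t → ℕ) (hF : F nil = 0) :
    ∑ j, F (zc cu cv A' B' e j) = ∑ j, F (cu j) + ∑ k ∈ A', F (cv k) := by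
  rw [← Finset.sum_add_sum_compl B' (fun j => F (zc cu cv A' B' e j))]
  have h1 : ∑ j ∈ B', F (zc cu cv A' B' e j) = ∑ k ∈ A', F (cv k) := by
    rw [← Finset.sum_attach B' (fun j => F (zc cu cv A' B' e j)),
      ← Finset.sum_attach A' (fun k => F (cv k))]
    apply Fintype.sum_equiv e
    intro x
    simp only [zc, dif_pos x.2]
  have h2 : ∑ j ∈ B'ᶜ, F (zc cu cv A' B' e j) = ∑ j ∈ B'ᶜ, F (cu j) := by
    apply Finset.sum_congr rfl
    intro j hj
    rw [Finset.mem_compl] at hj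
    simp only [zc, dif_neg hj]
  have h3 : ∑ j, F (cu j) = ∑ j ∈ B'ᶜ, F (cu j) := by
    rw [← Finset.sum_add_sum_compl B' (fun j => F (cu j))]
    have : ∑ j ∈ B', F (cu j) = 0 :=
      Finset.sum_eq_zero fun j hj => by rw [hBnil j hj, hF]
    omega
  rw [h1, h2, h3]
  omega

lemma sum_vc (F : TAry t → ℕ) (hF : F nil = 0) :
    ∑ k, F (vc cv A' k) + ∑ k ∈ A', F (cv k) = ∑ k, F (cv k) := by
  rw [← Finset.sum_add_sum_compl A' (fun k => F (vc cv A' k)),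
    ← Finset.sum_add_sum_compl A' (fun k => F (cv k))]
  have h1 : ∑ k ∈ A', F (vc cv A' k) = 0 :=
    Finset.sum_eq_zero fun k hk => by simp [vc, hk, hF]
  have h2 : ∑ k ∈ A'ᶜ, F (vc cv A' k) = ∑ k ∈ A'ᶜ, F (cv k) := by
    apply Finset.sum_congr rfl
    intro k hk
    rw [Finset.mem_compl] at hk
    simp [vc, hk]
  omega

lemma cnt_zc (hBnil : ∀ j ∈ B', cu j = nil) (hAnon : ∀ k ∈ A', cv k ≠ nil) :
    cnt (zc cu cv A' B' e) = cnt cu + A'.card := by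
  rw [cnt_eq_sum, cnt_eq_sum,
    sum_zc cu cv A' B' e hBnil (fun X => if X = nil then 0 else 1) (by simp)]
  have : ∑ k ∈ A', (if cv k = nil then 0 else 1) = A'.card := by
    rw [Finset.sum_congr rfl (fun k hk => by simp [hAnon k hk] : ∀ k ∈ A', _ = 1)]
    simp
  omega

lemma cnt_vc (hAnon : ∀ k ∈ A', cv k ≠ nil) :
    cnt (vc cv A') + A'.card = cnt cv := by
  rw [cnt_eq_sum, cnt_eq_sum]
  have h1 := sum_vc cv A' (fun X => if X = nil then 0 else 1) (by simp)
  beta_reduce at h1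
  have h2 : ∑ k ∈ A', (if cv k = nil then 0 else 1) = A'.card := by
    rw [Finset.sum_congr rfl (fun k hk => by simp [hAnon k hk] : ∀ k ∈ A', _ = 1)]
    simp
  omega

end moves

end TAry

namespace TAry
variable {t : ℕ}

lemma card_nil_filter (cu : Fin t → TAry t) :
    (Finset.univ.filter fun j => cu j = nil).card = t - cnt cu := by
  have h := Finset.card_filter_add_card_filter_not
    (s := (Finset.univ : Finset (Fin t))) (p := fun j => cu j = nil)
  have hc : (Finset.univ.filter fun j => ¬ cu j = nil).card = cnt cu := rfl
  simp only [Finset.card_univ, Fintype.card_fin] at h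
  omega

lemma exists_nonnil_child {cv : Fin t → TAry t} (h : 1 ≤ cnt cv) :
    ∃ i₀, i₀ ∈ Finset.univ.filter fun k => ¬ cv k = nil := by
  have : 0 < (Finset.univ.filter fun k => ¬ cv k = nil).card := h
  obtain ⟨i₀, hi⟩ := Finset.card_pos.mp this
  exact ⟨i₀, hi⟩

/-- Equal-depth full move-and-contract surgery: strict improvement. -/
lemma move_contract_surgery {T : TAry t} {p q : List (Fin t)} {cu cv : Fin t → TAry t}
    {s : List (Fin t)} {i j : Fin t} {p' q' : List (Fin t)}
    (hgu : getAt T p = node cu) (hgv : getAt T q = node cv)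
    (hij : i ≠ j) (hp : p = s ++ i :: p') (hq : q = s ++ j :: q')
    (hlen : p.length = q.length)
    (hcu1 : 1 ≤ cnt cu) (hcv2 : 2 ≤ cnt cv)
    (hcap : cnt cv - 1 ≤ t - cnt cu) :
    ∃ T' : TAry t, leaves T' = leaves T ∧ plFrom T' 0 < plFrom T 0 := by
  classical
  -- pick the surviving child i₀ of v
  obtain ⟨i₀, hi₀mem⟩ := exists_nonnil_child (by omega : 1 ≤ cnt cv)
  have hi₀ : cv i₀ ≠ nil := by simpa using hi₀mem
  set w := cv i₀ with hwdef
  -- the donated children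
  set A' : Finset (Fin t) := (Finset.univ.filter fun k => ¬ cv k = nil).erase i₀ with hA'
  have hcardA : A'.card = cnt cv - 1 := by
    rw [hA', Finset.card_erase_of_mem hi₀mem]; rfl
  have hAnon : ∀ k ∈ A', cv k ≠ nil := by
    intro k hk
    have := Finset.mem_of_mem_erase hk
    simpa using this
  -- the receiving slots
  have hcapB : cnt cv - 1 ≤ (Finset.univ.filter fun j => cu j = nil).card := by
    rw [card_nil_filter]; exact hcap
  obtain ⟨B', hB'sub, hcardB⟩ :=
    Finset.exists_subset_card_eq hcapB
  have hBnil : ∀ k ∈ B', cu k = nil := by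
    intro k hk
    have := hB'sub hk
    simpa using this
  have hee : B'.card = A'.card := by omega
  set e := Finset.equivOfCardEq hee with he
  set Z := node (zc cu cv A' B' e) with hZ
  -- step 1 : contract v to w
  have hvalq : getAt T q ≠ nil := by rw [hgv]; exact node_ne_nil cv
  set T1 := replaceAt T q w with hT1
  have hgT1p : getAt T1 p = node cu := by
    rw [hT1, hq, hp, getAt_replaceAt_diverge s (Ne.symm hij) q' p' T w, ← hp, hgu]
  have hvalp1 : getAt T1 p ≠ nil := by rw [hgT1p]; exact node_ne_nil cu
  set T' := replaceAt T1 p Z with hT'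
  have hcntzc : cnt (zc cu cv A' B' e) = cnt cu + A'.card := cnt_zc cu cv A' B' e hBnil hAnon
  refine ⟨T', ?_, ?_⟩
  -- leaves
  · have eq1 := loc_replace phiLeaf phiLeaf_congr q T w hvalq hi₀
    rw [hgv, ← hT1] at eq1
    have eq2 := loc_replace phiLeaf phiLeaf_congr p T1 Z hvalp1 (node_ne_nil _)
    rw [hgT1p, ← hT'] at eq2
    have hsumv : ∑ k, loc phiLeaf (cv k)
        = loc phiLeaf w + ∑ k ∈ A', loc phiLeaf (cv k) := by
      rw [sum_eq_sum_nonnil (loc phiLeaf) rfl cv,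
        ← Finset.add_sum_erase _ (fun k => loc phiLeaf (cv k)) hi₀mem]
    have hlcv : loc phiLeaf (node cv) = ∑ k, loc phiLeaf (cv k) := by
      rw [loc_node]
      have : phiLeaf cv = 0 := by unfold phiLeaf; rw [if_neg (by omega)]
      omega
    have hlcu : loc phiLeaf (node cu) = ∑ k, loc phiLeaf (cu k) := by
      rw [loc_node]
      have : phiLeaf cu = 0 := by unfold phiLeaf; rw [if_neg (by omega)]
      omega
    have hlZ : loc phiLeaf Z = ∑ k, loc phiLeaf (cu k) + ∑ k ∈ A', loc phiLeaf (cv k) := by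
      rw [hZ, loc_node, sum_zc cu cv A' B' e hBnil (loc phiLeaf) rfl]
      have : phiLeaf (zc cu cv A' B' e) = 0 := by
        unfold phiLeaf; rw [if_neg (by omega)]
      omega
    rw [leaves_eq_loc, leaves_eq_loc]
    omega
  -- path length
  · have eq1 := plFrom_replace q T w hvalq 0
    rw [hgv, ← hT1] at eq1
    have eq2 := plFrom_replace p T1 Z hvalp1 0
    rw [hgT1p, ← hT'] at eq2
    set L := q.length with hL
    have hPL : (0 : ℕ) + p.length = 0 + L := by rw [hlen]
    rw [hPL] at eq2
    have hsumv : ∑ k, plFrom (cv k) (0 + L + 1)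
        = plFrom w (0 + L + 1) + ∑ k ∈ A', plFrom (cv k) (0 + L + 1) := by
      rw [sum_eq_sum_nonnil (fun X => plFrom X (0 + L + 1)) rfl cv,
        ← Finset.add_sum_erase _ (fun k => plFrom (cv k) (0 + L + 1)) hi₀mem]
    have hlcv : plFrom (node cv) (0 + L) = (0 + L) + ∑ k, plFrom (cv k) (0 + L + 1) := rfl
    have hlcu : plFrom (node cu) (0 + L) = (0 + L) + ∑ k, plFrom (cu k) (0 + L + 1) := rfl
    have hlZ : plFrom Z (0 + L) = (0 + L) + (∑ k, plFrom (cu k) (0 + L + 1)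
        + ∑ k ∈ A', plFrom (cv k) (0 + L + 1)) := by
      rw [hZ]
      show (0 + L) + ∑ k, plFrom (zc cu cv A' B' e k) (0 + L + 1) = _
      rw [sum_zc cu cv A' B' e hBnil (fun X => plFrom X (0 + L + 1)) rfl]
    have hwstep : plFrom w (0 + L + 1) = plFrom w (0 + L) + size w := by
      rw [plFrom_eq w (0 + L + 1), plFrom_eq w (0 + L)]
      ring
    have hsz : 1 ≤ size w := one_le_size hi₀
    omega

end TAry

namespace TAry
variable {t : ℕ}

/-- Equal-depth partial move surgery: neutral move that decreases the slot count. -/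
lemma partial_move_surgery {T : TAry t} {p q : List (Fin t)} {cu cv : Fin t → TAry t}
    {s : List (Fin t)} {i j : Fin t} {p' q' : List (Fin t)}
    (hgu : getAt T p = node cu) (hgv : getAt T q = node cv)
    (hij : i ≠ j) (hp : p = s ++ i :: p') (hq : q = s ++ j :: q')
    (hlen : p.length = q.length)
    (hcu1 : 1 ≤ cnt cu) (hcut : cnt cu ≤ t - 1)
    (hcv : t - cnt cu + 2 ≤ cnt cv) (hcvt : cnt cv ≤ t - 1) :
    ∃ T' : TAry t, leaves T' = leaves T ∧ plFrom T' 0 = plFrom T 0 ∧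
      loc phiSlack T' = loc phiSlack T ∧ loc phiSlot T' + 1 = loc phiSlot T := by
  classical
  set m := t - cnt cu with hm
  have hm1 : 1 ≤ m := by omega
  -- donated children
  have hmA : m ≤ (Finset.univ.filter fun k => ¬ cv k = nil).card := by
    have : (Finset.univ.filter fun k => ¬ cv k = nil).card = cnt cv := rfl
    omega
  obtain ⟨A', hA'sub, hcardA⟩ := Finset.exists_subset_card_eq hmA
  have hAnon : ∀ k ∈ A', cv k ≠ nil := by
    intro k hk
    have := hA'sub hk
    simpa using this
  -- receiving slots
  set B' : Finset (Fin t) := Finset.univ.filter fun j => cu j = nil with hB'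
  have hcardB : B'.card = m := by rw [hB', card_nil_filter]
  have hBnil : ∀ k ∈ B', cu k = nil := by
    intro k hk
    rw [hB'] at hk
    simpa using hk
  have hee : B'.card = A'.card := by omega
  set e := Finset.equivOfCardEq hee with he
  set Z := node (zc cu cv A' B' e) with hZ
  set V' := node (vc cv A') with hV'
  have hcntzc : cnt (zc cu cv A' B' e) = t := by
    rw [cnt_zc cu cv A' B' e hBnil hAnon]
    omega
  have hcntvc : cnt (vc cv A') + m = cnt cv := by
    rw [← hcardA]
    exact cnt_vc cv A' hAnon
  have hvalq : getAt T q ≠ nil := by rw [hgv]; exact node_ne_nil cv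
  set T1 := replaceAt T q V' with hT1
  have hgT1p : getAt T1 p = node cu := by
    rw [hT1, hq, hp, getAt_replaceAt_diverge s (Ne.symm hij) q' p' T V', ← hp, hgu]
  have hvalp1 : getAt T1 p ≠ nil := by rw [hgT1p]; exact node_ne_nil cu
  set T' := replaceAt T1 p Z with hT'
  have ht1 : 1 ≤ t := by omega
  refine ⟨T', ?_, ?_, ?_, ?_⟩
  -- leaves
  · have eq1 := loc_replace phiLeaf phiLeaf_congr q T V' hvalq (node_ne_nil _)
    rw [hgv, ← hT1] at eq1
    have eq2 := loc_replace phiLeaf phiLeaf_congr p T1 Z hvalp1 (node_ne_nil _)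
    rw [hgT1p, ← hT'] at eq2
    have hsum := sum_vc cv A' (loc phiLeaf) rfl
    have hlcv : loc phiLeaf (node cv) = ∑ k, loc phiLeaf (cv k) := by
      rw [loc_node]
      have : phiLeaf cv = 0 := by unfold phiLeaf; rw [if_neg (by omega)]
      omega
    have hlcu : loc phiLeaf (node cu) = ∑ k, loc phiLeaf (cu k) := by
      rw [loc_node]
      have : phiLeaf cu = 0 := by unfold phiLeaf; rw [if_neg (by omega)]
      omega
    have hlV : loc phiLeaf V' = ∑ k, loc phiLeaf (vc cv A' k) := by
      rw [hV', loc_node]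
      have : phiLeaf (vc cv A') = 0 := by unfold phiLeaf; rw [if_neg (by omega)]
      omega
    have hlZ : loc phiLeaf Z = ∑ k, loc phiLeaf (cu k) + ∑ k ∈ A', loc phiLeaf (cv k) := by
      rw [hZ, loc_node, sum_zc cu cv A' B' e hBnil (loc phiLeaf) rfl]
      have : phiLeaf (zc cu cv A' B' e) = 0 := by
        unfold phiLeaf; rw [if_neg (by omega)]
      omega
    rw [leaves_eq_loc, leaves_eq_loc]
    omega
  -- path length
  · have eq1 := plFrom_replace q T V' hvalq 0
    rw [hgv, ← hT1] at eq1
    have eq2 := plFrom_replace p T1 Z hvalp1 0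
    rw [hgT1p, ← hT'] at eq2
    set L := q.length with hL
    have hPL : (0 : ℕ) + p.length = 0 + L := by rw [hlen]
    rw [hPL] at eq2
    have hsum := sum_vc cv A' (fun X => plFrom X (0 + L + 1)) rfl
    beta_reduce at hsum
    have hlcv : plFrom (node cv) (0 + L) = (0 + L) + ∑ k, plFrom (cv k) (0 + L + 1) := rfl
    have hlcu : plFrom (node cu) (0 + L) = (0 + L) + ∑ k, plFrom (cu k) (0 + L + 1) := rfl
    have hlV : plFrom V' (0 + L) = (0 + L) + ∑ k, plFrom (vc cv A' k) (0 + L + 1) := rfl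
    have hlZ : plFrom Z (0 + L) = (0 + L) + (∑ k, plFrom (cu k) (0 + L + 1)
        + ∑ k ∈ A', plFrom (cv k) (0 + L + 1)) := by
      rw [hZ]
      show (0 + L) + ∑ k, plFrom (zc cu cv A' B' e k) (0 + L + 1) = _
      rw [sum_zc cu cv A' B' e hBnil (fun X => plFrom X (0 + L + 1)) rfl]
    omega
  -- slack
  · have eq1 := loc_replace phiSlack phiSlack_congr q T V' hvalq (node_ne_nil _)
    rw [hgv, ← hT1] at eq1
    have eq2 := loc_replace phiSlack phiSlack_congr p T1 Z hvalp1 (node_ne_nil _)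
    rw [hgT1p, ← hT'] at eq2
    have hsum := sum_vc cv A' (loc phiSlack) rfl
    have hctv := cnt_le cv
    have hlcv : loc phiSlack (node cv) = (t - cnt cv) + ∑ k, loc phiSlack (cv k) := by
      rw [loc_node]
      have : phiSlack cv = t - cnt cv := by unfold phiSlack; rw [if_neg (by omega)]
      omega
    have hlcu : loc phiSlack (node cu) = m + ∑ k, loc phiSlack (cu k) := by
      rw [loc_node]
      have : phiSlack cu = t - cnt cu := by unfold phiSlack; rw [if_neg (by omega)]
      omega
    have hlV : loc phiSlack V' = (t - cnt cv + m) + ∑ k, loc phiSlack (vc cv A' k) := by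
      rw [hV', loc_node]
      have : phiSlack (vc cv A') = t - cnt (vc cv A') := by
        unfold phiSlack; rw [if_neg (by omega)]
      omega
    have hlZ : loc phiSlack Z
        = ∑ k, loc phiSlack (cu k) + ∑ k ∈ A', loc phiSlack (cv k) := by
      rw [hZ, loc_node, sum_zc cu cv A' B' e hBnil (loc phiSlack) rfl]
      have : phiSlack (zc cu cv A' B' e) = 0 := by
        unfold phiSlack; rw [hcntzc, if_neg (by omega)]
        omega
      omega
    omega
  -- slot count
  · have eq1 := loc_replace phiSlot phiSlot_congr q T V' hvalq (node_ne_nil _)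
    rw [hgv, ← hT1] at eq1
    have eq2 := loc_replace phiSlot phiSlot_congr p T1 Z hvalp1 (node_ne_nil _)
    rw [hgT1p, ← hT'] at eq2
    have hsum := sum_vc cv A' (loc phiSlot) rfl
    have hlcv : loc phiSlot (node cv) = 1 + ∑ k, loc phiSlot (cv k) := by
      rw [loc_node]
      have : phiSlot cv = 1 := by unfold phiSlot; rw [if_pos (by omega)]
      omega
    have hlcu : loc phiSlot (node cu) = 1 + ∑ k, loc phiSlot (cu k) := by
      rw [loc_node]
      have : phiSlot cu = 1 := by unfold phiSlot; rw [if_pos (by omega)]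
      omega
    have hlV : loc phiSlot V' = 1 + ∑ k, loc phiSlot (vc cv A' k) := by
      rw [hV', loc_node]
      have : phiSlot (vc cv A') = 1 := by
        unfold phiSlot; rw [if_pos (by omega)]
      omega
    have hlZ : loc phiSlot Z
        = ∑ k, loc phiSlot (cu k) + ∑ k ∈ A', loc phiSlot (cv k) := by
      rw [hZ, loc_node, sum_zc cu cv A' B' e hBnil (loc phiSlot) rfl]
      have : phiSlot (zc cu cv A' B' e) = 0 := by
        unfold phiSlot; rw [hcntzc, if_neg (by omega)]
      omega
    omega

end TAry

namespace TAry
variable {t : ℕ}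

lemma plFrom_gap (X : TAry t) {d e : ℕ} (h : d ≤ e) :
    plFrom X d + (e - d) * size X = plFrom X e := by
  rw [plFrom_eq X d, plFrom_eq X e, Nat.sub_mul]
  have := Nat.mul_le_mul_right (size X) h
  omega

lemma sum_plFrom_gap (c : Fin t → TAry t) {d e : ℕ} (h : d ≤ e) :
    ∑ k, plFrom (c k) d + (e - d) * ∑ k, size (c k) = ∑ k, plFrom (c k) e := by
  rw [Finset.mul_sum, ← Finset.sum_add_distrib]
  exact Finset.sum_congr rfl fun k _ => plFrom_gap (c k) h

/-- Deep-to-shallow move surgery: strict improvement when the donating slotted node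
is strictly deeper than the receiving slotted node. -/
lemma deep_move_surgery {T : TAry t} {p q : List (Fin t)} {cu cv : Fin t → TAry t}
    (hgu : getAt T p = node cu) (hgv : getAt T q = node cv)
    (hlen : p.length < q.length)
    (hcu1 : 1 ≤ cnt cu) (hcut : cnt cu ≤ t - 1) (ht2 : 2 ≤ t) (hcv2 : 2 ≤ cnt cv) :
    ∃ T' : TAry t, leaves T' = leaves T ∧ plFrom T' 0 < plFrom T 0 := by
  classical
  -- a free slot of u
  have hslotcard : 1 ≤ (Finset.univ.filter fun j => cu j = nil).card := by
    rw [card_nil_filter]; omega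
  obtain ⟨js, hjs⟩ := Finset.card_pos.mp hslotcard
  have hjsnil : cu js = nil := by simpa using hjs
  -- the surviving child of v
  obtain ⟨i₀, hi₀mem⟩ := exists_nonnil_child (by omega : 1 ≤ cnt cv)
  have hi₀ : cv i₀ ≠ nil := by simpa using hi₀mem
  set w := cv i₀ with hwdef
  -- the composite node
  set X := node (vc cv {i₀}) with hX
  have hAnon : ∀ k ∈ ({i₀} : Finset (Fin t)), cv k ≠ nil := by
    intro k hk; rw [Finset.mem_singleton] at hk; rw [hk]; exact hi₀
  have hcntx : cnt (vc cv {i₀}) + 1 = cnt cv := by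
    have := cnt_vc cv {i₀} hAnon
    simpa using this
  have hvalq : getAt T q ≠ nil := by rw [hgv]; exact node_ne_nil cv
  have hvalp : getAt T p ≠ nil := by rw [hgu]; exact node_ne_nil cu
  set T1 := replaceAt T q w with hT1
  -- the subtree of T1 at p
  obtain ⟨c₁, hg1, hj1, hc1cnt⟩ :
      ∃ c₁, getAt T1 p = node c₁ ∧ c₁ js = nil ∧ cnt c₁ = cnt cu := by
    rcases prefix_or_diverge p q (le_of_lt hlen) with ⟨s', hq⟩ | ⟨s, i, j, p', q', hij, hp, hq⟩
    · -- p is a prefix of q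
      cases s' with
      | nil => rw [hq] at hlen; simp at hlen
      | cons a s'' =>
        have hgq : getAt (cu a) s'' = node cv := by
          have := getAt_append T p (a :: s'')
          rw [← hq, hgv, hgu] at this
          exact this.symm
        have hcua : cu a ≠ nil := by
          intro hn
          rw [hn, getAt_nil] at hgq
          exact node_ne_nil cv hgq.symm
        have haj : a ≠ js := fun h => hcua (h ▸ hjsnil)
        have hpre := getAt_replaceAt_prefix p (a :: s'') T w hvalp
        rw [← hq, hgu] at hpre
        rw [hT1]
        refine ⟨fun k => if k = a then replaceAt (cu a) s'' w else cu k, hpre, ?_, ?_⟩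
        · beta_reduce; rw [if_neg (Ne.symm haj)]; exact hjsnil
        · apply cnt_congr
          intro k
          by_cases hk : k = a
          · subst hk
            rw [if_pos rfl]
            have hrne : replaceAt (cu k) s'' w ≠ nil :=
              replaceAt_ne_nil (by rw [hgq]; exact node_ne_nil cv) hi₀
            constructor
            · intro hh; exact absurd hh hrne
            · intro hh; exact absurd hh hcua
          · rw [if_neg hk]
    · -- p and q diverge
      refine ⟨cu, ?_, hjsnil, rfl⟩
      rw [hT1, hq, hp, getAt_replaceAt_diverge s (Ne.symm hij) q' p' T w, ← hp, hgu]
  have hval1 : getAt T1 p ≠ nil := by rw [hg1]; exact node_ne_nil c₁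
  set c₁' : Fin t → TAry t := fun k => if k = js then X else c₁ k with hc₁'
  set T' := replaceAt T1 p (node c₁') with hT'
  have hcnt1' : 1 ≤ cnt c₁' := by
    apply cnt_pos_of_ne (i := js)
    rw [hc₁']
    simp only [if_pos rfl]
    exact node_ne_nil _
  refine ⟨T', ?_, ?_⟩
  -- leaves
  · have eq1 := loc_replace phiLeaf phiLeaf_congr q T w hvalq hi₀
    rw [hgv, ← hT1] at eq1
    have eq2 := loc_replace phiLeaf phiLeaf_congr p T1 (node c₁') hval1 (node_ne_nil _)
    rw [hg1, ← hT'] at eq2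
    have hsum := sum_vc cv {i₀} (loc phiLeaf) rfl
    rw [Finset.sum_singleton, ← hwdef] at hsum
    have hlcv : loc phiLeaf (node cv) = ∑ k, loc phiLeaf (cv k) := by
      rw [loc_node]
      have : phiLeaf cv = 0 := by unfold phiLeaf; rw [if_neg (by omega)]
      omega
    have hlX : loc phiLeaf X = ∑ k, loc phiLeaf (vc cv {i₀} k) := by
      rw [hX, loc_node]
      have : phiLeaf (vc cv {i₀}) = 0 := by unfold phiLeaf; rw [if_neg (by omega)]
      omega
    have hsplit1 : ∑ k, loc phiLeaf (c₁' k)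
        = loc phiLeaf X + ∑ k ∈ {js}ᶜ, loc phiLeaf (c₁ k) := by
      rw [hc₁']
      exact sum_children (loc phiLeaf) c₁ js X
    have hsplit2 : ∑ k, loc phiLeaf (c₁ k) = ∑ k ∈ {js}ᶜ, loc phiLeaf (c₁ k) := by
      rw [sum_split (loc phiLeaf) c₁ js, hj1]
      show loc phiLeaf nil + _ = _
      rw [show loc phiLeaf (nil : TAry t) = 0 from rfl, Nat.zero_add]
    have hl1' : loc phiLeaf (node c₁') = loc phiLeaf (node c₁) + loc phiLeaf X := by
      rw [loc_node, loc_node, hsplit1, hsplit2]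
      have h1 : phiLeaf c₁' = 0 := by unfold phiLeaf; rw [if_neg (by omega)]
      have h2 : phiLeaf c₁ = 0 := by unfold phiLeaf; rw [if_neg (by omega)]
      omega
    rw [leaves_eq_loc, leaves_eq_loc]
    omega
  -- path length
  · have eq1 := plFrom_replace q T w hvalq 0
    rw [hgv, ← hT1] at eq1
    have eq2 := plFrom_replace p T1 (node c₁') hval1 0
    rw [hg1, ← hT'] at eq2
    set L := q.length with hL
    set P := p.length with hP
    -- expansions
    have hlcv : plFrom (node cv) (0 + L) = (0 + L) + ∑ k, plFrom (cv k) (0 + L + 1) := rfl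
    have hl1 : plFrom (node c₁) (0 + P) = (0 + P) + ∑ k, plFrom (c₁ k) (0 + P + 1) := rfl
    have hl1' : plFrom (node c₁') (0 + P)
        = (0 + P) + (plFrom X (0 + P + 1) + ∑ k ∈ {js}ᶜ, plFrom (c₁ k) (0 + P + 1)) := by
      show (0 + P) + ∑ k, plFrom (c₁' k) (0 + P + 1) = _
      rw [hc₁', sum_children (fun Y => plFrom Y (0 + P + 1)) c₁ js X]
    have hsplit2 : ∑ k, plFrom (c₁ k) (0 + P + 1)
        = ∑ k ∈ {js}ᶜ, plFrom (c₁ k) (0 + P + 1) := by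
      rw [sum_split (fun Y => plFrom Y (0 + P + 1)) c₁ js, hj1]
      show plFrom nil (0 + P + 1) + _ = _
      rw [show plFrom (nil : TAry t) (0 + P + 1) = 0 from rfl, Nat.zero_add]
    have hlX : plFrom X (0 + P + 1)
        = (0 + P + 1) + ∑ k, plFrom (vc cv {i₀} k) (0 + P + 2) := rfl
    have hsumX := sum_vc cv {i₀} (fun Y => plFrom Y (0 + P + 2)) rfl
    beta_reduce at hsumX
    rw [Finset.sum_singleton, ← hwdef] at hsumX
    -- gap relations
    have hPL2 : 0 + P + 2 ≤ 0 + L + 1 := by omega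
    have hgapS := sum_plFrom_gap cv hPL2
    have hgapW := plFrom_gap w hPL2
    have hgapw2 := plFrom_gap w (show 0 + L ≤ 0 + L + 1 by omega)
    have hszw : 1 ≤ size w := one_le_size hi₀
    have hsle : size w ≤ ∑ k, size (cv k) :=
      Finset.single_le_sum (f := fun k => size (cv k)) (fun k _ => Nat.zero_le _)
        (Finset.mem_univ i₀)
    have hmul : (0 + L + 1 - (0 + P + 2)) * size w
        ≤ (0 + L + 1 - (0 + P + 2)) * ∑ k, size (cv k) :=
      Nat.mul_le_mul_left _ hsle
    have hLP : 0 + L + 1 - (0 + P + 2) + (P + 1) = L := by omega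
    have hw1 : (0 + L + 1 - (0 + L)) * size w = size w := by
      have : 0 + L + 1 - (0 + L) = 1 := by omega
      rw [this, Nat.one_mul]
    rw [hw1] at hgapw2
    omega

end TAry

namespace TAry
variable {t : ℕ}

lemma phiSlot_le_one (c : Fin t → TAry t) : phiSlot c ≤ 1 := by
  unfold phiSlot
  split <;> omega

/-- The main engine: a path-length-minimal tree cannot have total slack `≥ t-1`. -/
lemma no_big_slack (ht2 : 2 ≤ t) :
    ∀ n (T : TAry t), loc phiSlot T ≤ n →
      (∀ T' : TAry t, leaves T' = leaves T → plFrom T 0 ≤ plFrom T' 0) →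
      t - 1 ≤ loc phiSlack T → False := by
  intro n
  induction n with
  | zero =>
    intro T hn hmin hslack
    have h := slack_le_slot T
    have h0 : loc phiSlot T = 0 := by omega
    rw [h0, Nat.mul_zero] at h
    omega
  | succ n ih =>
    intro T hn hmin hslack
    by_cases h1 : 1 ≤ loc phiC1 T
    · -- contract a single-child node
      obtain ⟨q, c, hg, hφ⟩ := exists_witness T h1
      have hcnt : cnt c = 1 := by
        unfold phiC1 at hφ
        by_contra hc
        rw [if_neg hc] at hφ
        omega
      obtain ⟨T', hleaves, hlt⟩ := contract_surgery hg hcnt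
      have := hmin T' hleaves
      omega
    · have hc1 : loc phiC1 T = 0 := by omega
      have hA5 := slack_le_slot_of_c1_free hc1
      have hslot2 : 2 ≤ loc phiSlot T := by
        by_contra hs
        have h01 : loc phiSlot T = 0 ∨ loc phiSlot T = 1 := by omega
        rcases h01 with h0 | h0 <;> rw [h0] at hA5 <;> omega
      obtain ⟨p, q, cp, cq, hpq, hgp, hφp, hgq, hφq⟩ :=
        exists_two_witnesses phiSlot_le_one T hslot2
      have hcnt_of : ∀ (c : Fin t → TAry t), 1 ≤ phiSlot c → 1 ≤ cnt c ∧ cnt c ≤ t - 1 := by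
        intro c hφ
        unfold phiSlot at hφ
        by_contra hc
        rw [if_neg (by tauto)] at hφ
        omega
      have hcnt2_of : ∀ (r : List (Fin t)) (c : Fin t → TAry t),
          getAt T r = node c → 1 ≤ phiSlot c → 2 ≤ cnt c := by
        intro r c hg hφ
        obtain ⟨hc1', hc2'⟩ := hcnt_of c hφ
        rcases Nat.lt_or_ge (cnt c) 2 with hlt | hge
        · have : cnt c = 1 := by omega
          have : 1 ≤ phiC1 c := by unfold phiC1; rw [if_pos this]
          have := loc_pos_of_witness r T c hg this
          omega
        · exact hge
      have key : ∀ (p q : List (Fin t)) (cp cq : Fin t → TAry t), p ≠ q →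
          getAt T p = node cp → 1 ≤ phiSlot cp → getAt T q = node cq → 1 ≤ phiSlot cq →
          p.length ≤ q.length → False := by
        intro p q cp cq hpq hgp hφp hgq hφq hle
        obtain ⟨hcp1, hcpt⟩ := hcnt_of cp hφp
        obtain ⟨hcq1, hcqt⟩ := hcnt_of cq hφq
        have hcp2 := hcnt2_of p cp hgp hφp
        have hcq2 := hcnt2_of q cq hgq hφq
        rcases Nat.lt_or_ge p.length q.length with hlt | hge
        · obtain ⟨T', hleaves, hplt⟩ :=
            deep_move_surgery hgp hgq hlt hcp1 hcpt ht2 hcq2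
          have := hmin T' hleaves
          omega
        · have hlen : p.length = q.length := by omega
          obtain ⟨s, i, j, p', q', hij, hp, hq⟩ := exists_diverge_of_ne p q hlen hpq
          by_cases hcap : cnt cq - 1 ≤ t - cnt cp
          · obtain ⟨T', hleaves, hplt⟩ :=
              move_contract_surgery hgp hgq hij hp hq hlen hcp1 hcq2 hcap
            have := hmin T' hleaves
            omega
          · have hcv : t - cnt cp + 2 ≤ cnt cq := by omega
            obtain ⟨T', hleaves, hpl, hslack', hslot'⟩ :=
              partial_move_surgery hgp hgq hij hp hq hlen hcp1 hcpt hcv hcqt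
            apply ih T' (by omega)
            · intro T'' hl''
              rw [hpl]
              exact hmin T'' (by rw [hl'', hleaves])
            · omega
      rcases Nat.le_total p.length q.length with hle | hle
      · exact key p q cp cq hpq hgp hφp hgq hφq hle
      · exact key q p cq cp (Ne.symm hpq) hgq hφq hgp hφp hle

end TAry


/-- A `t`-ary tree with `ℓ ≥ 1` leaves of minimal path length among all `t`-ary trees with
`ℓ` leaves has exactly `ℓ + ⌈(ℓ-1)/(t-1)⌉` nodes. -/
theorem stmt15 (t ℓ : ℕ) (ht : 2 ≤ t) (hℓ : 1 ≤ ℓ) (T : TAry t) (hT : T.leaves = ℓ)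
    (hmin : ∀ T' : TAry t, T'.leaves = ℓ → T.pathLength ≤ T'.pathLength) :
    T.size = ℓ + (ℓ - 1 + (t - 2)) / (t - 1) := by
  have hTne : T ≠ TAry.nil := by
    intro h
    rw [h] at hT
    have : (TAry.nil : TAry t).leaves = 0 := rfl
    omega
  have hslack : TAry.loc TAry.phiSlack T ≤ t - 2 := by
    by_contra h
    exact TAry.no_big_slack ht (TAry.loc TAry.phiSlot T) T le_rfl
      (fun T' hl => hmin T' (by rw [hl, hT])) (by omega)
  have hA1 : TAry.loc TAry.phiLeaf T = 1 + TAry.loc TAry.phiExc T :=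
    TAry.leaves_eq_one_add_exc hTne
  have hA2 := TAry.slack_add_exc T
  have hsize := TAry.size_eq_leaves_add_int T
  have hl : TAry.loc TAry.phiLeaf T = ℓ := by rw [← TAry.leaves_eq_loc, hT]
  set m := TAry.loc TAry.phiInt T with hmdef
  have hm : (t - 1) * m = (ℓ - 1) + TAry.loc TAry.phiSlack T := by omega
  rw [hsize, hl]
  congr 1
  have heq : ℓ - 1 + (t - 2) = (t - 1) * m + (t - 2 - TAry.loc TAry.phiSlack T) := by omega
  rw [heq, Nat.mul_add_div (by omega), Nat.div_eq_of_lt (by omega)]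
  omega
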